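/- Let X : [0,∞) → ℝ be measurable, let (u₀ⁿ)_{n≥1} ∈ ℓ², and set uₜⁿ = u₀ⁿ + a_n^{1/2} ∫₀ᵗ cos(n X_s) ds and vₜⁿ = v₀ⁿ − a_n^{1/2} ∫₀ᵗ sin(n X_s) ds for t ≥ 0, with (v₀ⁿ)_{n≥1} ∈ ℓ². Then for every t ≥ 0: (u₀ⁿ)_n ∈ O¹ if and only if (uₜⁿ)_n ∈ O¹, and (v₀ⁿ)_n ∈ O¹ if and only if (vₜⁿ)_n ∈ O¹. (This yields that the set A = ℝ × O¹ × O¹ is invariant under the dynamics, which is the key to the failure of the strong Feller property.) -/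

import Mathlib

noncomputable section

open scoped BigOperators
open MeasureTheory

/-- The ℓ² space of square-summable real sequences indexed by `n ≥ 1`. -/
abbrev l2 : Type := lp (fun _ : ℕ+ => ℝ) 2

lemma aux_add (c b u : ℕ+ → ℝ) (hc : ∀ n, 0 ≤ c n)
    (hb : Summable fun n => c n * b n ^ 2) (hu : Summable fun n => c n * u n ^ 2) :
    Summable fun n => c n * (u n + b n) ^ 2 := by
  refine Summable.of_nonneg_of_le (fun n => mul_nonneg (hc n) (sq_nonneg _))
    (fun n => ?_) ((hu.mul_left 2).add (hb.mul_left 2))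
  have h := hc n
  nlinarith [sq_nonneg (u n - b n), sq_nonneg (u n + b n)]

lemma aux_iff (c b u : ℕ+ → ℝ) (hc : ∀ n, 0 ≤ c n)
    (hb : Summable fun n => c n * b n ^ 2) :
    (Summable fun n => c n * u n ^ 2) ↔ Summable fun n => c n * (u n + b n) ^ 2 := by
  constructor
  · exact aux_add c b u hc hb
  · intro h
    have := aux_add c (fun n => -b n) (fun n => u n + b n) hc (by simpa using hb) h
    simpa using this

lemma pnat_inv_summable : Summable fun n : ℕ+ => ((1 + (n : ℝ) ^ 2) ^ 3)⁻¹ := by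
  have h2 : Summable fun n : ℕ => 1 / (n : ℝ) ^ 2 := Real.summable_one_div_nat_pow.mpr one_lt_two
  have hcomp := h2.comp_injective
    (fun m n h => PNat.coe_injective h : Function.Injective (PNat.val))
  refine Summable.of_nonneg_of_le (fun n => by positivity) (fun n => ?_) hcomp
  have hn : (1 : ℝ) ≤ (n : ℝ) := by exact_mod_cast n.one_le
  simp only [Function.comp]
  rw [one_div, inv_le_inv₀ (by positivity) (by positivity)]
  nlinarith [sq_nonneg ((n : ℝ) ^ 2 - 1), sq_nonneg ((n : ℝ) ^ 3 - (n : ℝ))]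

lemma summable_weight_a (a : ℕ+ → ℝ) (hpos : ∀ n, 0 < a n)
    (hO5 : Summable fun n : ℕ+ => (1 + (n : ℝ) ^ 2) ^ 5 * a n ^ 2) :
    Summable fun n : ℕ+ => (1 + (n : ℝ) ^ 2) * a n := by
  refine Summable.of_nonneg_of_le (fun n => mul_nonneg (by positivity) (hpos n).le) (fun n => ?_)
    ((hO5.add pnat_inv_summable).mul_left (1 / 2))
  set P : ℝ := 1 + (n : ℝ) ^ 2 with hP
  have hPpos : (0 : ℝ) < P := by positivity
  have hc : (P ^ 3)⁻¹ * P ^ 3 = 1 := inv_mul_cancel₀ (by positivity)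
  have hc0 : (0 : ℝ) ≤ (P ^ 3)⁻¹ := by positivity
  have e1 : (P ^ 3)⁻¹ * P ^ 8 = P ^ 5 := by field_simp
  have e2 : (P ^ 3)⁻¹ * P ^ 4 = P := by field_simp
  nlinarith [mul_nonneg hc0 (sq_nonneg (P ^ 4 * a n - 1)), sq_nonneg (a n), (hpos n).le,
    mul_nonneg (sq_nonneg (a n)) (sub_nonneg.mpr (le_of_eq e1.symm)), e1, e2,
    mul_le_mul_of_nonneg_right (le_of_eq e1) (sq_nonneg (a n)),
    mul_le_mul_of_nonneg_right (le_of_eq e2) (hpos n).le,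
    mul_le_mul_of_nonneg_right (le_of_eq e2.symm) (hpos n).le]

lemma summable_b (a : ℕ+ → ℝ) (hpos : ∀ n, 0 < a n)
    (hO5 : Summable fun n : ℕ+ => (1 + (n : ℝ) ^ 2) ^ 5 * a n ^ 2)
    (t : ℝ) (ht : 0 ≤ t) (I : ℕ+ → ℝ) (hI : ∀ n, |I n| ≤ t) :
    Summable fun n : ℕ+ => (1 + (n : ℝ) ^ 2) * (Real.sqrt (a n) * I n) ^ 2 := by
  refine Summable.of_nonneg_of_le (fun n => by positivity) (fun n => ?_)
    (((summable_weight_a a hpos hO5).mul_left (t ^ 2)))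
  have h1 : (Real.sqrt (a n) * I n) ^ 2 = a n * I n ^ 2 := by
    rw [mul_pow, Real.sq_sqrt (hpos n).le]
  have h2 : I n ^ 2 ≤ t ^ 2 := by
    have := hI n
    nlinarith [abs_nonneg (I n), sq_abs (I n)]
  have hPpos : (0 : ℝ) ≤ 1 + (n : ℝ) ^ 2 := by positivity
  rw [h1]
  nlinarith [(hpos n).le, mul_le_mul_of_nonneg_left h2 (hpos n).le]

/-- With `uₜⁿ = u₀ⁿ + √aₙ ∫₀ᵗ cos(n Xₛ) ds` and
`vₜⁿ = v₀ⁿ − √aₙ ∫₀ᵗ sin(n Xₛ) ds`, for every `t ≥ 0` one has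
`(u₀ⁿ)ₙ ∈ O¹ ↔ (uₜⁿ)ₙ ∈ O¹` and `(v₀ⁿ)ₙ ∈ O¹ ↔ (vₜⁿ)ₙ ∈ O¹`, where
`O¹ = {(cₙ)ₙ : Σ (1+n²) cₙ² < ∞}`. -/
theorem stmt16 (a : ℕ+ → ℝ) (hpos : ∀ n, 0 < a n)
    (hO5 : Summable fun n : ℕ+ => (1 + (n : ℝ) ^ 2) ^ 5 * a n ^ 2)
    (X : ℝ → ℝ) (hX : Measurable X) (u0 v0 : l2) :
    ∀ t ≥ (0 : ℝ),
      ((Summable fun n : ℕ+ => (1 + (n : ℝ) ^ 2) * (u0 n) ^ 2) ↔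
        Summable fun n : ℕ+ => (1 + (n : ℝ) ^ 2) *
          (u0 n + Real.sqrt (a n) * ∫ s in Set.Ioc (0 : ℝ) t, Real.cos ((n : ℝ) * X s)) ^ 2) ∧
      ((Summable fun n : ℕ+ => (1 + (n : ℝ) ^ 2) * (v0 n) ^ 2) ↔
        Summable fun n : ℕ+ => (1 + (n : ℝ) ^ 2) *
          (v0 n - Real.sqrt (a n) * ∫ s in Set.Ioc (0 : ℝ) t, Real.sin ((n : ℝ) * X s)) ^ 2) := by
  intro t ht
  have hvol : volume (Set.Ioc (0 : ℝ) t) < ⊤ := by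
    simp [Real.volume_Ioc]
  have hvolr : (volume (Set.Ioc (0 : ℝ) t)).toReal = t := by
    rw [Real.volume_Ioc, ENNReal.toReal_ofReal (by linarith)]
    ring
  have hIcos : ∀ n : ℕ+, |∫ s in Set.Ioc (0 : ℝ) t, Real.cos ((n : ℝ) * X s)| ≤ t := by
    intro n
    have hm : AEStronglyMeasurable (fun s => Real.cos ((n : ℝ) * X s))
        (volume.restrict (Set.Ioc (0 : ℝ) t)) :=
      (Real.measurable_cos.comp ((measurable_const.mul hX))).aestronglyMeasurable
    have := norm_setIntegral_le_of_norm_le_const (f := fun s => Real.cos ((n : ℝ) * X s)) (C := 1) hvol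
      (fun x _ => by simpa using Real.abs_cos_le_one ((n : ℝ) * X x))
    simpa [Real.norm_eq_abs, ENNReal.toReal_ofReal (ht : (0:ℝ) ≤ t), Real.volume_real_Ioc_of_le ht] using this
  have hIsin : ∀ n : ℕ+, |∫ s in Set.Ioc (0 : ℝ) t, Real.sin ((n : ℝ) * X s)| ≤ t := by
    intro n
    have hm : AEStronglyMeasurable (fun s => Real.sin ((n : ℝ) * X s))
        (volume.restrict (Set.Ioc (0 : ℝ) t)) :=
      (Real.measurable_sin.comp ((measurable_const.mul hX))).aestronglyMeasurable
    have := norm_setIntegral_le_of_norm_le_const (f := fun s => Real.sin ((n : ℝ) * X s)) (C := 1) hvol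
      (fun x _ => by simpa using Real.abs_sin_le_one ((n : ℝ) * X x))
    simpa [Real.norm_eq_abs, ENNReal.toReal_ofReal (ht : (0:ℝ) ≤ t), Real.volume_real_Ioc_of_le ht] using this
  constructor
  · exact aux_iff (fun n => 1 + (n : ℝ) ^ 2)
      (fun n => Real.sqrt (a n) * ∫ s in Set.Ioc (0 : ℝ) t, Real.cos ((n : ℝ) * X s))
      (fun n => u0 n) (fun n => by positivity)
      (summable_b a hpos hO5 t ht _ hIcos)
  · have hb : Summable fun n : ℕ+ => (1 + (n : ℝ) ^ 2) *
        (-(Real.sqrt (a n) * ∫ s in Set.Ioc (0 : ℝ) t, Real.sin ((n : ℝ) * X s))) ^ 2 := by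
      simpa using summable_b a hpos hO5 t ht _ hIsin
    have := aux_iff (fun n => 1 + (n : ℝ) ^ 2)
      (fun n => -(Real.sqrt (a n) * ∫ s in Set.Ioc (0 : ℝ) t, Real.sin ((n : ℝ) * X s)))
      (fun n => v0 n) (fun n => by positivity) hb
    simpa [sub_eq_add_neg] using this
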